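/- Let r ≥ 2, let K : Fin r → ℕ with K_i ≥ 1 for all i and M = ∑_i K_i, and let n : Fin r → ℕ with n_i ≤ K_i for all i and N = ∑_i n_i. For 1 ≤ l ≤ r−1 set N_l = N − ∑_{i<l} n_i and M_l = M − ∑_{i<l} K_i. Then the fermionic counting probability factorizes into a product of binary (two-bin) fermionic probabilities: P^F(n_1,…,n_r | K_1,…,K_r) = ∏_{l=1}^{r−1} P^F(n_l, N_l−n_l | K_l, M_l−K_l), i.e. (N!/∏_i n_i!)·((M−N)!/M!)·∏_i K_i!/(K_i−n_i)! = ∏_{l=1}^{r−1} [ (N_l!/(n_l!(N_l−n_l)!)) · ((M_l−N_l)!/M_l!) · (K_l!/(K_l−n_l)!) · ((M_l−K_l)!/(M_l−K_l−N_l+n_l)!) ]. -/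

import Mathlib

open Finset

lemma fermionic_aux (r : ℕ) (hr : 1 ≤ r) (K n : ℕ → ℕ) :
    ((∑ i ∈ range r, n i).factorial : ℝ) / (∏ i ∈ range r, ((n i).factorial : ℝ)) *
        (((∑ i ∈ range r, K i - ∑ i ∈ range r, n i).factorial : ℝ) /
          ((∑ i ∈ range r, K i).factorial : ℝ)) *
        ∏ i ∈ range r, ((K i).factorial : ℝ) / ((K i - n i).factorial : ℝ)
    = ∏ l ∈ range (r - 1),
        (((∑ i ∈ range r, n i - ∑ i ∈ range l, n i).factorial : ℝ) /
            (((n l).factorial : ℝ) *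
              (((∑ i ∈ range r, n i - ∑ i ∈ range l, n i) - n l).factorial : ℝ)) *
          ((((∑ i ∈ range r, K i - ∑ i ∈ range l, K i) -
              (∑ i ∈ range r, n i - ∑ i ∈ range l, n i)).factorial : ℝ) /
            ((∑ i ∈ range r, K i - ∑ i ∈ range l, K i).factorial : ℝ)) *
          (((K l).factorial : ℝ) / ((K l - n l).factorial : ℝ)) *
          ((((∑ i ∈ range r, K i - ∑ i ∈ range l, K i) - K l).factorial : ℝ) /
            ((((∑ i ∈ range r, K i - ∑ i ∈ range l, K i) - K l) -
              ((∑ i ∈ range r, n i - ∑ i ∈ range l, n i) - n l)).factorial : ℝ))) := by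
  induction r, hr using Nat.le_induction generalizing K n with
  | base =>
    simp only [range_one, sum_singleton, prod_singleton, Nat.sub_self, range_zero, prod_empty]
    have h1 : ((n 0).factorial : ℝ) ≠ 0 := Nat.cast_ne_zero.mpr (Nat.factorial_ne_zero _)
    have h2 : ((K 0).factorial : ℝ) ≠ 0 := Nat.cast_ne_zero.mpr (Nat.factorial_ne_zero _)
    have h3 : ((K 0 - n 0).factorial : ℝ) ≠ 0 := Nat.cast_ne_zero.mpr (Nat.factorial_ne_zero _)
    field_simp
  | succ r hr ih =>
    obtain ⟨m, rfl⟩ : ∃ m, r = m + 1 := ⟨r - 1, by omega⟩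
    have ihs := ih (fun i => K (i+1)) (fun i => n (i+1))
    simp only [Nat.add_sub_cancel] at ihs
    have en : ∑ i ∈ range (m+2), n i = ∑ i ∈ range (m+1), n (i+1) + n 0 := sum_range_succ' n (m+1)
    have eK : ∑ i ∈ range (m+2), K i = ∑ i ∈ range (m+1), K (i+1) + K 0 := sum_range_succ' K (m+1)
    -- convert ih's RHS to use original-index form
    rw [show m + 2 - 1 = m + 1 by rfl]
    conv_rhs => rw [prod_range_succ']
    rw [show (∏ l ∈ range m,
          (((∑ i ∈ range (m+2), n i - ∑ i ∈ range (l+1), n i).factorial : ℝ) /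
              (((n (l+1)).factorial : ℝ) *
                (((∑ i ∈ range (m+2), n i - ∑ i ∈ range (l+1), n i) - n (l+1)).factorial : ℝ)) *
            ((((∑ i ∈ range (m+2), K i - ∑ i ∈ range (l+1), K i) -
                (∑ i ∈ range (m+2), n i - ∑ i ∈ range (l+1), n i)).factorial : ℝ) /
              ((∑ i ∈ range (m+2), K i - ∑ i ∈ range (l+1), K i).factorial : ℝ)) *
            (((K (l+1)).factorial : ℝ) / ((K (l+1) - n (l+1)).factorial : ℝ)) *
            ((((∑ i ∈ range (m+2), K i - ∑ i ∈ range (l+1), K i) - K (l+1)).factorial : ℝ) /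
              ((((∑ i ∈ range (m+2), K i - ∑ i ∈ range (l+1), K i) - K (l+1)) -
                ((∑ i ∈ range (m+2), n i - ∑ i ∈ range (l+1), n i) - n (l+1))).factorial : ℝ))))
        = ((∑ i ∈ range (m+1), n (i+1)).factorial : ℝ) / (∏ i ∈ range (m+1), ((n (i+1)).factorial : ℝ)) *
          (((∑ i ∈ range (m+1), K (i+1) - ∑ i ∈ range (m+1), n (i+1)).factorial : ℝ) /
            ((∑ i ∈ range (m+1), K (i+1)).factorial : ℝ)) *
          ∏ i ∈ range (m+1), ((K (i+1)).factorial : ℝ) / ((K (i+1) - n (i+1)).factorial : ℝ)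
      from by
        rw [ihs]
        refine prod_congr rfl fun l hl => ?_
        have h1 : ∑ i ∈ range (m+1), n (i+1) - ∑ i ∈ range l, n (i+1)
            = ∑ i ∈ range (m+2), n i - ∑ i ∈ range (l+1), n i := by
          have := sum_range_succ' n l; omega
        have h2 : ∑ i ∈ range (m+1), K (i+1) - ∑ i ∈ range l, K (i+1)
            = ∑ i ∈ range (m+2), K i - ∑ i ∈ range (l+1), K i := by
          have := sum_range_succ' K l; omega
        rw [h1, h2]]
    -- now pure algebra
    rw [prod_range_succ' (fun i => ((n i).factorial : ℝ)) (m+1),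
        prod_range_succ' (fun i => ((K i).factorial : ℝ) / ((K i - n i).factorial : ℝ)) (m+1)]
    simp only [range_zero, sum_empty, Nat.sub_zero]
    have hS : ∑ i ∈ range (m+1), n (i+1) = ∑ i ∈ range (m+2), n i - n 0 := by omega
    have hT : ∑ i ∈ range (m+1), K (i+1) = ∑ i ∈ range (m+2), K i - K 0 := by omega
    have hST : ∑ i ∈ range (m+1), K (i+1) - ∑ i ∈ range (m+1), n (i+1)
        = (∑ i ∈ range (m+2), K i - K 0) - (∑ i ∈ range (m+2), n i - n 0) := by omega
    rw [hST, hS, hT]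
    set N := ∑ i ∈ range (m+2), n i
    set M := ∑ i ∈ range (m+2), K i
    have f0 : ∀ k : ℕ, ((k.factorial : ℝ)) ≠ 0 := fun k => Nat.cast_ne_zero.mpr (Nat.factorial_ne_zero _)
    have hp : (∏ i ∈ range (m+1), ((n (i+1)).factorial : ℝ)) ≠ 0 :=
      prod_ne_zero_iff.mpr fun i _ => f0 _
    field_simp

/-- Factorization of the fermionic counting probability into a layered product of
binary (two-bin) fermionic probabilities: with `N_l = N - ∑_{i<l} nᵢ` and
`M_l = M - ∑_{i<l} Kᵢ` (0-based layers `l = 0, …, r-2`),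
`P^F(n₁,…,n_r | K₁,…,K_r) = ∏_l P^F(n_l, N_l-n_l | K_l, M_l-K_l)`. -/
theorem fermionic_factorization
    (r : ℕ) (hr : 2 ≤ r) (K : ℕ → ℕ) (hK : ∀ i < r, 1 ≤ K i)
    (M : ℕ) (hM : M = ∑ i ∈ range r, K i)
    (n : ℕ → ℕ) (hnK : ∀ i < r, n i ≤ K i)
    (N : ℕ) (hN : N = ∑ i ∈ range r, n i) :
    (N.factorial : ℝ) / (∏ i ∈ range r, ((n i).factorial : ℝ)) *
        (((M - N).factorial : ℝ) / (M.factorial : ℝ)) *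
        ∏ i ∈ range r, ((K i).factorial : ℝ) / ((K i - n i).factorial : ℝ)
    = ∏ l ∈ range (r - 1),
        (((N - ∑ i ∈ range l, n i).factorial : ℝ) /
            (((n l).factorial : ℝ) * (((N - ∑ i ∈ range l, n i) - n l).factorial : ℝ)) *
          ((((M - ∑ i ∈ range l, K i) - (N - ∑ i ∈ range l, n i)).factorial : ℝ) /
            ((M - ∑ i ∈ range l, K i).factorial : ℝ)) *
          (((K l).factorial : ℝ) / ((K l - n l).factorial : ℝ)) *
          ((((M - ∑ i ∈ range l, K i) - K l).factorial : ℝ) /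
            ((((M - ∑ i ∈ range l, K i) - K l) -
              ((N - ∑ i ∈ range l, n i) - n l)).factorial : ℝ))) := by
  subst hM hN
  exact fermionic_aux r (by omega) K n
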